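/- Let f, f⋆ ∈ [0,1] and let R be a random variable with values in [0,1] and E[R] = f⋆. Define Y = (f − R)² − (f⋆ − R)². Then Var[Y] ≤ 4 E[Y]. -/

import Mathlib

open MeasureTheory

theorem stmt2 {Ω : Type*} [MeasurableSpace Ω] (μ : Measure Ω) [IsProbabilityMeasure μ]
    (f fstar : ℝ) (hf : f ∈ Set.Icc (0:ℝ) 1) (hfstar : fstar ∈ Set.Icc (0:ℝ) 1)
    (R : Ω → ℝ) (hRmeas : Measurable R)
    (hR : ∀ ω, R ω ∈ Set.Icc (0:ℝ) 1)
    (hmean : ∫ ω, R ω ∂μ = fstar) :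
    ProbabilityTheory.variance (fun ω => (f - R ω) ^ 2 - (fstar - R ω) ^ 2) μ
      ≤ 4 * ∫ ω, ((f - R ω) ^ 2 - (fstar - R ω) ^ 2) ∂μ := by
  set c := f - fstar with hc
  set Z : Ω → ℝ := fun ω => (f + fstar) - 2 * R ω with hZ
  -- integrability of R
  have hRint : Integrable R μ := by
    apply (MemLp.integrable le_rfl)
    apply MemLp.of_bound hRmeas.aestronglyMeasurable 1
    filter_upwards with ω
    rw [Real.norm_eq_abs, abs_le]
    exact ⟨by linarith [(hR ω).1], (hR ω).2⟩
  have hZmeas : Measurable Z := by fun_prop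
  have hZmem : MemLp Z 2 μ := by
    apply MemLp.of_bound hZmeas.aestronglyMeasurable 4
    filter_upwards with ω
    rw [Real.norm_eq_abs, abs_le]
    constructor <;> simp only [hZ] <;>
      nlinarith [(hR ω).1, (hR ω).2, hf.1, hf.2, hfstar.1, hfstar.2]
  have hZint : Integrable Z μ := (integrable_const ((f:ℝ) + fstar)).sub (hRint.const_mul 2)
  have hEZ : ∫ ω, Z ω ∂μ = c := by
    simp only [hZ]
    rw [integral_sub (integrable_const _) (hRint.const_mul 2), integral_const,
      integral_const_mul, hmean]
    simp [hc]; ring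
  -- rewrite Y as c * Z
  have hYeq : (fun ω => (f - R ω) ^ 2 - (fstar - R ω) ^ 2) = fun ω => c * Z ω := by
    funext ω; simp only [hc, hZ]; ring
  -- expectation of Y
  have hEY : ∫ ω, c * Z ω ∂μ = c ^ 2 := by
    rw [integral_const_mul, hEZ]; ring
  -- variance of Z ≤ 4
  have hVarZ : ProbabilityTheory.variance Z μ ≤ 4 := by
    rw [ProbabilityTheory.variance_eq_integral hZmeas.aemeasurable, hEZ]
    have hpw : ((Z - fun _ => c) ^ (2:ℕ) : Ω → ℝ) = fun ω => (Z ω - c) ^ 2 := rfl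
    have hle : ∀ ω, (Z ω - c) ^ 2 ≤ (4:ℝ) := by
      intro ω
      simp only [hZ, hc]
      nlinarith [(hR ω).1, (hR ω).2, hfstar.1, hfstar.2]
    have hint : Integrable (fun ω => (Z ω - c) ^ 2) μ := by
      exact (hZmem.sub (memLp_const c)).integrable_sq
    calc ∫ ω, (Z ω - c) ^ 2 ∂μ ≤ ∫ _, (4:ℝ) ∂μ := integral_mono hint (integrable_const _) hle
      _ = 4 := by simp
  rw [hYeq, ProbabilityTheory.variance_const_mul, hEY]
  nlinarith [ProbabilityTheory.variance_nonneg Z μ, sq_nonneg c, hVarZ]
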